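/- Let c : ℕ → ℝ≥0 with ∑_{n} c_n ≤ 1, and define f : ℝ≥0 → [0,∞] by f(x) = ∑_{n} c_n · x^n, the sum taken in [0,∞]. Then, as x → 1 from the left (x ∈ [0,1)), the quotient (f(1) − f(x)) / (1 − x) tends in [0,∞] to ∑_{n} n · c_n (which may be +∞). -/

import Mathlib

open scoped NNReal ENNReal

open Filter

lemma geomaux (x : ℝ≥0∞) (hx : x ≤ 1) (hxt : x ≠ ∞) (n : ℕ) :
    (1 - x) * ∑ k ∈ Finset.range n, x ^ k = 1 - x ^ n := by
  induction n with
  | zero => simp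
  | succ n ih =>
    rw [Finset.sum_range_succ, mul_add, ih, ENNReal.sub_mul (fun _ _ => ENNReal.pow_ne_top hxt),
      one_mul, ← pow_succ']
    exact tsub_add_tsub_cancel (pow_le_one' hx n) (pow_le_pow_right_of_le_one' hx (Nat.le_succ n)) |>.symm.symm

/-- The power series `f(x) = ∑ₙ cₙ xⁿ` (in `[0,∞]`) associated with coefficients
`c : ℕ → ℝ≥0`. -/
noncomputable def F (c : ℕ → ℝ≥0) (x : ℝ≥0) : ℝ≥0∞ :=
  ∑' n : ℕ, (c n : ℝ≥0∞) * (x : ℝ≥0∞) ^ n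

/-- If `∑ₙ cₙ ≤ 1`, then `(f(1) − f(x))/(1 − x)` tends in `[0,∞]` to `∑ₙ n·cₙ`
(possibly `+∞`) as `x → 1⁻`. -/
theorem stmt18 (c : ℕ → ℝ≥0) (hc : ∑' n : ℕ, (c n : ℝ≥0∞) ≤ 1) :
    Filter.Tendsto (fun x : ℝ≥0 => (F c 1 - F c x) / (1 - (x : ℝ≥0∞)))
      (nhdsWithin 1 (Set.Iio 1)) (nhds (∑' n : ℕ, (n : ℝ≥0∞) * (c n : ℝ≥0∞))) := by
  set L : ℝ≥0∞ := ∑' n : ℕ, (n : ℝ≥0∞) * (c n : ℝ≥0∞) with hL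
  set g : ℝ≥0 → ℝ≥0∞ := fun x => ∑' n : ℕ, (c n : ℝ≥0∞) * ∑ k ∈ Finset.range n, (x : ℝ≥0∞) ^ k
    with hg
  have hx1 : ∀ x : ℝ≥0, x < 1 → ((x : ℝ≥0∞) ≤ 1 ∧ (x : ℝ≥0∞) ≠ ∞) := fun x hx =>
    ⟨by exact_mod_cast hx.le, ENNReal.coe_ne_top⟩
  -- Step B : the quotient equals g x for x < 1
  have hquot : ∀ x : ℝ≥0, x < 1 →
      (F c 1 - F c x) / (1 - (x : ℝ≥0∞)) = g x := by
    intro x hx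
    obtain ⟨hxle, hxt⟩ := hx1 x hx
    have hFx : F c x = ∑' n, (c n : ℝ≥0∞) * (x : ℝ≥0∞) ^ n := rfl
    have hF1 : F c 1 = ∑' n, (c n : ℝ≥0∞) := by simp [F]
    have hle : ∀ n, (c n : ℝ≥0∞) * (x : ℝ≥0∞) ^ n ≤ (c n : ℝ≥0∞) := fun n =>
      mul_le_of_le_one_right zero_le (pow_le_one' hxle n)
    have hfin : ∑' n, (c n : ℝ≥0∞) * (x : ℝ≥0∞) ^ n ≠ ∞ :=
      ((ENNReal.tsum_le_tsum hle).trans hc).trans_lt ENNReal.one_lt_top |>.ne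
    have hsub : F c 1 - F c x = ∑' n, ((c n : ℝ≥0∞) - (c n : ℝ≥0∞) * (x : ℝ≥0∞) ^ n) := by
      rw [hF1, hFx, ← ENNReal.tsum_sub hfin hle]
    have hterm : ∀ n, (c n : ℝ≥0∞) - (c n : ℝ≥0∞) * (x : ℝ≥0∞) ^ n
        = (1 - (x : ℝ≥0∞)) * ((c n : ℝ≥0∞) * ∑ k ∈ Finset.range n, (x : ℝ≥0∞) ^ k) := by
      intro n
      rw [← mul_assoc, mul_comm (1 - (x : ℝ≥0∞)) (c n : ℝ≥0∞), mul_assoc,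
        geomaux _ hxle hxt n, ENNReal.mul_sub (fun _ _ => ENNReal.coe_ne_top), mul_one]
    rw [hsub, tsum_congr hterm, ENNReal.tsum_mul_left]
    have h0 : 1 - (x : ℝ≥0∞) ≠ 0 := by
      simp only [ne_eq, tsub_eq_zero_iff_le, not_le]
      exact_mod_cast hx
    rw [mul_comm, mul_div_assoc, ENNReal.div_self h0 (ENNReal.sub_ne_top ENNReal.one_ne_top),
      mul_one]
  -- Step C : g x ≤ L
  have hgle : ∀ x : ℝ≥0, x < 1 → g x ≤ L := by
    intro x hx
    refine ENNReal.tsum_le_tsum fun n => ?_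
    rw [mul_comm (n : ℝ≥0∞)]
    refine mul_le_mul_right ?_ _
    calc ∑ k ∈ Finset.range n, (x : ℝ≥0∞) ^ k
        ≤ ∑ k ∈ Finset.range n, 1 := Finset.sum_le_sum fun k _ => pow_le_one' (hx1 x hx).1 k
      _ = n := by simp
  -- Step D: tendsto
  have key : Filter.Tendsto g (nhdsWithin 1 (Set.Iio 1)) (nhds L) := by
    rw [tendsto_order]
    constructor
    · intro a ha
      have : a < ⨆ s : Finset ℕ, ∑ n ∈ s, (n : ℝ≥0∞) * (c n : ℝ≥0∞) := by
        rwa [← ENNReal.tsum_eq_iSup_sum]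
      obtain ⟨s, hs⟩ := lt_iSup_iff.1 this
      have hcont : Filter.Tendsto
          (fun x : ℝ≥0 => ∑ n ∈ s, (c n : ℝ≥0∞) * ∑ k ∈ Finset.range n, (x : ℝ≥0∞) ^ k)
          (nhdsWithin 1 (Set.Iio 1)) (nhds (∑ n ∈ s, (n : ℝ≥0∞) * (c n : ℝ≥0∞))) := by
        have hc2 : Continuous
            (fun x : ℝ≥0 => ∑ n ∈ s, (c n : ℝ≥0∞) * ∑ k ∈ Finset.range n, (x : ℝ≥0∞) ^ k) := by
          refine continuous_finset_sum _ fun n _ => ?_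
          refine (ENNReal.continuous_const_mul ENNReal.coe_ne_top).comp ?_
          exact continuous_finset_sum _ fun k _ =>
            (ENNReal.continuous_pow k).comp ENNReal.continuous_coe
        have := (hc2.tendsto 1).mono_left (nhdsWithin_le_nhds (s := Set.Iio 1))
        simpa [mul_comm] using this
      filter_upwards [hcont.eventually_const_lt hs, self_mem_nhdsWithin] with x hx hx'
      exact hx.trans_le (ENNReal.sum_le_tsum s)
    · intro a ha
      filter_upwards [self_mem_nhdsWithin] with x hx
      exact (hgle x hx).trans_lt ha
  refine key.congr' ?_
  filter_upwards [self_mem_nhdsWithin] with x hx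
  exact (hquot x hx).symm
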